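/- Let $\mathcal{P}$ be a multiset of points in $\mathbb{Z}_p^2$, uniform across scales $\Delta^{k\epsilon}$ for $1 \le k \le \epsilon^{-1}$ (each $\Delta^{k\epsilon}$-cube of $\mathcal{P}$ contains about the same number of points). Suppose some scale $w = \Delta^{k\epsilon}$ satisfies $a > 2\Delta^{-\epsilon} \cdot \rho |\mathbb{D}_{\rho}(\mathcal{P})|$ fails for all $\rho = \Delta^{m\epsilon}$ with $m > k$ (i.e., $a \le 2\Delta^{-\epsilon}\rho|\mathbb{D}_\rho(\mathcal{P})|$ for all finer listed scales) but holds at scale $w$. Then for every $w$-cube $Q$ of $\mathcal{P}$, the rescaled set $\phi_Q(\mathcal{P} \cap Q)$ is a $(\Delta/w, 1, C\Delta^{-\epsilon})$-set: for all $r \in [\Delta/w, 1]$ and every $r$-ball $B$, $|\phi_Q(\mathcal{P}\cap Q) \cap B| \le C\Delta^{-\epsilon} \cdot r \cdot |\mathcal{P} \cap Q|$. -/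
import Mathlib


open scoped Classical

noncomputable section

/-- A `δ`-tube in `ℤ_p²`: the `δ`-neighborhood of the line `y = a x + b`. -/
def tube (p : ℕ) [Fact p.Prime] (δ : ℝ) (a b : ℤ_[p]) : Set (ℤ_[p] × ℤ_[p]) :=
  {z | ‖z.2 - (a * z.1 + b)‖ ≤ δ}

/-- The collection of (dyadic) `δ`-tubes. -/
def tubes (p : ℕ) [Fact p.Prime] (δ : ℝ) : Set (Set (ℤ_[p] × ℤ_[p])) :=
  {T | ∃ a b, T = tube p δ a b}

/-- The number of points of the multiset `P` lying in the set `A` (with multiplicity). -/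
def mcount (p : ℕ) [Fact p.Prime] (P : Multiset (ℤ_[p] × ℤ_[p])) (A : Set (ℤ_[p] × ℤ_[p])) : ℕ :=
  (P.filter (· ∈ A)).card

/-- The collection of `Δ`-cubes (p-adic balls of radius `Δ`). -/
def cubes (p : ℕ) [Fact p.Prime] (Δ : ℝ) : Set (Set (ℤ_[p] × ℤ_[p])) :=
  {Q | ∃ x, Q = Metric.closedBall x Δ}

/-- The `Δ`-cubes meeting the multiset `P` (the set `𝔻_Δ(P)`). -/
def cubesOf (p : ℕ) [Fact p.Prime] (Δ : ℝ) (P : Multiset (ℤ_[p] × ℤ_[p])) :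
    Set (Set (ℤ_[p] × ℤ_[p])) :=
  {Q | Q ∈ cubes p Δ ∧ 0 < mcount p P Q}

instance prodUltrametric {X Y : Type*} [PseudoMetricSpace X] [PseudoMetricSpace Y]
    [IsUltrametricDist X] [IsUltrametricDist Y] : IsUltrametricDist (X × Y) := by
  constructor
  intro x y z
  rw [Prod.dist_eq, Prod.dist_eq, Prod.dist_eq]
  refine max_le ?_ ?_
  · exact (dist_triangle_max _ y.1 _).trans (max_le_max (le_max_left _ _) (le_max_left _ _))
  · exact (dist_triangle_max _ y.2 _).trans (max_le_max (le_max_right _ _) (le_max_right _ _))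

lemma mcount_mono (p : ℕ) [Fact p.Prime] (P : Multiset (ℤ_[p] × ℤ_[p]))
    {A B : Set (ℤ_[p] × ℤ_[p])} (h : A ⊆ B) : mcount p P A ≤ mcount p P B :=
  Multiset.card_le_card (Multiset.monotone_filter_right P (fun z hz => h hz))

lemma mcount_pos_iff (p : ℕ) [Fact p.Prime] (P : Multiset (ℤ_[p] × ℤ_[p]))
    (A : Set (ℤ_[p] × ℤ_[p])) : 0 < mcount p P A ↔ ∃ z ∈ P, z ∈ A := by
  rw [mcount, Multiset.card_pos_iff_exists_mem]
  constructor
  · rintro ⟨z, hz⟩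
    rw [Multiset.mem_filter] at hz
    exact ⟨z, hz.1, hz.2⟩
  · rintro ⟨z, hz, hzA⟩
    exact ⟨z, Multiset.mem_filter.mpr ⟨hz, hzA⟩⟩

/-- Each point of `P` lies in exactly one `δ`-cube of `𝔻_δ(P)`. -/
lemma existsUnique_cube (p : ℕ) [Fact p.Prime] {δ : ℝ} (hδ : 0 ≤ δ)
    (P : Multiset (ℤ_[p] × ℤ_[p])) {z : ℤ_[p] × ℤ_[p]} (hz : z ∈ P) :
    ∃! Q, Q ∈ cubesOf p δ P ∧ z ∈ Q := by
  refine ⟨Metric.closedBall z δ, ⟨⟨⟨z, rfl⟩, ?_⟩, Metric.mem_closedBall_self hδ⟩, ?_⟩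
  · exact (mcount_pos_iff p P _).mpr ⟨z, hz, Metric.mem_closedBall_self hδ⟩
  · rintro Q ⟨⟨⟨x, rfl⟩, -⟩, hzQ⟩
    exact IsUltrametricDist.closedBall_eq_of_mem hzQ

lemma cubesOf_finite (p : ℕ) [Fact p.Prime] (δ : ℝ) (P : Multiset (ℤ_[p] × ℤ_[p])) :
    (cubesOf p δ P).Finite := by
  refine Set.Finite.subset ((P.finite_toSet).image (fun z => Metric.closedBall z δ)) ?_
  rintro Q ⟨⟨x, rfl⟩, hpos⟩
  obtain ⟨z, hzP, hzQ⟩ := (mcount_pos_iff p P _).mp hpos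
  exact ⟨z, hzP, (IsUltrametricDist.closedBall_eq_of_mem hzQ).symm⟩

lemma sum_filter_card {β : Type*} (F : Finset (Set β)) (P : Multiset β)
    (h : ∀ z ∈ P, ∃! Q, Q ∈ F ∧ z ∈ Q) :
    ∑ Q ∈ F, (P.filter (· ∈ Q)).card = Multiset.card P := by
  induction P using Multiset.induction_on with
  | empty => simp
  | cons z P ih =>
    have hz := h z (Multiset.mem_cons_self z P)
    have ih' := ih (fun w hw => h w (Multiset.mem_cons_of_mem hw))
    have hone : ∑ Q ∈ F, (if z ∈ Q then 1 else 0) = 1 := by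
      rw [← Finset.card_filter]
      rw [Finset.card_eq_one]
      obtain ⟨Q₀, hQ₀, huniq⟩ := hz
      refine ⟨Q₀, ?_⟩
      ext Q
      simp only [Finset.mem_filter, Finset.mem_singleton]
      constructor
      · intro hQ; exact huniq Q hQ
      · rintro rfl; exact hQ₀
    calc ∑ Q ∈ F, ((z ::ₘ P).filter (· ∈ Q)).card
        = ∑ Q ∈ F, ((if z ∈ Q then 1 else 0) + (P.filter (· ∈ Q)).card) := by
          refine Finset.sum_congr rfl (fun Q _ => ?_)
          rw [Multiset.filter_cons, Multiset.card_add]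
          congr 1
          split <;> simp
      _ = 1 + Multiset.card P := by rw [Finset.sum_add_distrib, hone, ih']
      _ = Multiset.card (z ::ₘ P) := by rw [Multiset.card_cons]; omega

lemma sum_mcount (p : ℕ) [Fact p.Prime] {δ : ℝ} (hδ : 0 ≤ δ) (P : Multiset (ℤ_[p] × ℤ_[p])) :
    ∑ Q ∈ (cubesOf_finite p δ P).toFinset, mcount p P Q = Multiset.card P := by
  refine sum_filter_card _ P (fun z hz => ?_)
  obtain ⟨Q₀, hQ₀, huniq⟩ := existsUnique_cube p hδ P hz
  exact ⟨Q₀, ⟨(Set.Finite.mem_toFinset _).mpr hQ₀.1, hQ₀.2⟩,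
    fun Q hQ => huniq Q ⟨(Set.Finite.mem_toFinset _).mp hQ.1, hQ.2⟩⟩

lemma count_lower (p : ℕ) [Fact p.Prime] {δ : ℝ} (hδ : 0 ≤ δ) (P : Multiset (ℤ_[p] × ℤ_[p]))
    {Q : Set (ℤ_[p] × ℤ_[p])} (hQ : Q ∈ cubesOf p δ P)
    (hunif : ∀ Q' ∈ cubesOf p δ P, ∀ Q'' ∈ cubesOf p δ P, mcount p P Q' ≤ 2 * mcount p P Q'') :
    Multiset.card P ≤ 2 * (cubesOf p δ P).ncard * mcount p P Q := by
  have hfin := cubesOf_finite p δ P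
  rw [Set.ncard_eq_toFinset_card _ hfin]
  calc Multiset.card P = ∑ Q' ∈ hfin.toFinset, mcount p P Q' := (sum_mcount p hδ P).symm
    _ ≤ ∑ _Q' ∈ hfin.toFinset, 2 * mcount p P Q := by
        refine Finset.sum_le_sum (fun Q' hQ' => ?_)
        exact hunif Q' ((Set.Finite.mem_toFinset _).mp hQ') Q hQ
    _ = hfin.toFinset.card * (2 * mcount p P Q) := by rw [Finset.sum_const, smul_eq_mul]
    _ = 2 * hfin.toFinset.card * mcount p P Q := by ring

lemma count_upper (p : ℕ) [Fact p.Prime] {δ : ℝ} (hδ : 0 ≤ δ) (P : Multiset (ℤ_[p] × ℤ_[p]))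
    {Q : Set (ℤ_[p] × ℤ_[p])} (hQ : Q ∈ cubesOf p δ P)
    (hunif : ∀ Q' ∈ cubesOf p δ P, ∀ Q'' ∈ cubesOf p δ P, mcount p P Q' ≤ 2 * mcount p P Q'') :
    (cubesOf p δ P).ncard * mcount p P Q ≤ 2 * Multiset.card P := by
  have hfin := cubesOf_finite p δ P
  rw [Set.ncard_eq_toFinset_card _ hfin]
  calc hfin.toFinset.card * mcount p P Q = ∑ _Q' ∈ hfin.toFinset, mcount p P Q := by
        rw [Finset.sum_const, smul_eq_mul]
    _ ≤ ∑ Q' ∈ hfin.toFinset, 2 * mcount p P Q' := by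
        refine Finset.sum_le_sum (fun Q' hQ' => ?_)
        exact hunif Q hQ Q' ((Set.Finite.mem_toFinset _).mp hQ')
    _ = 2 * Multiset.card P := by rw [← Finset.mul_sum, sum_mcount p hδ P]

/-- `NDb p Δ P b T` : the number of `Δ`-cubes `Q` with `|T ∩ Q ∩ P| ≥ b`. -/
def NDb (p : ℕ) [Fact p.Prime] (Δ : ℝ) (P : Multiset (ℤ_[p] × ℤ_[p])) (b : ℕ)
    (T : Set (ℤ_[p] × ℤ_[p])) : ℕ :=
  Set.ncard {Q | Q ∈ cubes p Δ ∧ b ≤ mcount p P (T ∩ Q)}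

/-- The closed `w`-neighborhood (thickening) of a set in `ℤ_p²`. -/
def thicken (p : ℕ) [Fact p.Prime] (A : Set (ℤ_[p] × ℤ_[p])) (w : ℝ) : Set (ℤ_[p] × ℤ_[p]) :=
  {z | ∃ y ∈ A, dist z y ≤ w}

/-- at the chosen intermediate scale `w = Δ^{kε}`, the rescaled set
`φ_Q(𝒫 ∩ Q)` is a `(Δ/w, 1, CΔ^{-ε})`-set; equivalently (via the canonical similarity
`φ_Q : Q → ℤ_p²`), for all `r ∈ [Δ/w, 1]` every `rw`-ball inside `Q` contains at most
`C Δ^{-ε} r |𝒫 ∩ Q|` points of `𝒫 ∩ Q`. -/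
lemma arith_helper {A MQ Nm Nk cP D E : ℝ} (f2 : Nm * A ≤ 2 * cP) (f3 : cP ≤ 2 * Nk * MQ)
    (f4 : Nk < D * Nm) (f5 : 1 ≤ Nm) (f6 : D ≤ E) (hMQ : 0 ≤ MQ) (hD : 0 ≤ D) :
    A ≤ 4 * E * MQ := by
  refine le_of_mul_le_mul_left ?_ (lt_of_lt_of_le one_pos f5)
  calc Nm * A ≤ 2 * cP := f2
    _ ≤ 4 * Nk * MQ := by linarith
    _ ≤ 4 * (D * Nm) * MQ := by nlinarith
    _ ≤ Nm * (4 * E * MQ) := by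
        have h := mul_nonneg (mul_nonneg (sub_nonneg.mpr f6) (zero_le_one.trans f5)) hMQ
        nlinarith [h]


theorem statement7 :
    ∃ C : ℝ, 0 < C ∧
    ∀ (p : ℕ) [inst : Fact p.Prime] (Δ ε a : ℝ) (K k : ℕ)
      (P : Multiset (ℤ_[p] × ℤ_[p])),
      0 < Δ → Δ < 1 → 0 < K → ε = 1 / K → 1 ≤ k → k ≤ K →
      -- 𝒫 is uniform at the scales Δ^{jε}, 1 ≤ j ≤ ε⁻¹
      (∀ j : ℕ, 1 ≤ j → j ≤ K →
        ∀ Q ∈ cubesOf p (Δ ^ ((j : ℝ) * ε)) P, ∀ Q' ∈ cubesOf p (Δ ^ ((j : ℝ) * ε)) P,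
          mcount p P Q ≤ 2 * mcount p P Q') →
      -- the condition a > 2Δ^{-ε} ρ |𝔻_ρ(𝒫)| holds at scale w = Δ^{kε} ...
      (2 * Δ ^ (-ε) * Δ ^ ((k : ℝ) * ε) *
          (Set.ncard (cubesOf p (Δ ^ ((k : ℝ) * ε)) P) : ℝ) < a) →
      -- ... and fails at all finer listed scales ρ = Δ^{mε}, m > k
      (∀ m : ℕ, k < m → m ≤ K →
        a ≤ 2 * Δ ^ (-ε) * Δ ^ ((m : ℝ) * ε) *
          (Set.ncard (cubesOf p (Δ ^ ((m : ℝ) * ε)) P) : ℝ)) →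
      ∀ Q ∈ cubesOf p (Δ ^ ((k : ℝ) * ε)) P,
        ∀ r : ℝ, Δ ^ ((1 : ℝ) - (k : ℝ) * ε) ≤ r → r ≤ 1 → ∀ x : ℤ_[p] × ℤ_[p], x ∈ Q →
          (mcount p P (Q ∩ Metric.closedBall x (r * Δ ^ ((k : ℝ) * ε))) : ℝ) ≤
            C * Δ ^ (-ε) * r * (mcount p P Q : ℝ) := by
  refine ⟨4, by norm_num, ?_⟩
  intro p inst Δ ε a K k P hΔ0 hΔ1 hK hε hk1 hkK hunif hwin hfail Q hQ r hr1 hr2 x hx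
  have hKpos : (0:ℝ) < K := by exact_mod_cast hK
  have hε0 : 0 < ε := by rw [hε]; positivity
  have hlogΔ : Real.log Δ < 0 := Real.log_neg hΔ0 hΔ1
  have hr0 : 0 < r := lt_of_lt_of_le (Real.rpow_pos_of_pos hΔ0 _) hr1
  set t : ℝ := Real.log r / Real.log Δ with ht
  have hrt : Δ ^ t = r := by
    have hmul : Real.log Δ * t = Real.log r := by
      rw [ht, mul_comm]; exact div_mul_cancel₀ _ hlogΔ.ne
    rw [Real.rpow_def_of_pos hΔ0, hmul, Real.exp_log hr0]
  have ht0 : 0 ≤ t := by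
    have h1 : Real.log r ≤ 0 := Real.log_nonpos hr0.le hr2
    have h2 := div_nonneg (neg_nonneg.2 h1) (neg_nonneg.2 hlogΔ.le)
    rwa [neg_div_neg_eq] at h2
  have hKε : (K:ℝ) * ε = 1 := by rw [hε]; field_simp
  have htle : t ≤ 1 - (k:ℝ) * ε := by
    have h := hr1
    rw [← hrt] at h
    exact (Real.rpow_le_rpow_left_iff_of_base_lt_one hΔ0 hΔ1).mp h
  set n : ℕ := ⌊t * K⌋₊ with hn
  have hnle : (n:ℝ) ≤ t * K := Nat.floor_le (by positivity)
  have hnlt : t * K < n + 1 := Nat.lt_floor_add_one _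
  -- the w-ball count bound
  have hQsub :
      mcount p P (Q ∩ Metric.closedBall x (r * Δ ^ ((k:ℝ) * ε))) ≤ mcount p P Q :=
    mcount_mono p P Set.inter_subset_left
  have hMQ0 : (0:ℝ) ≤ (mcount p P Q : ℝ) := Nat.cast_nonneg _
  rcases Nat.eq_zero_or_pos n with hn0 | hn1
  · -- coarse case: r > Δ^ε
    have htK1 : t * K < 1 := by
      rw [hn0] at hnlt; simpa using hnlt
    have htε : t < ε := by
      rw [hε, lt_div_iff₀ hKpos]; exact htK1
    have hrε : Δ ^ ε < r := by
      rw [← hrt]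
      exact Real.rpow_lt_rpow_of_exponent_gt hΔ0 hΔ1 htε
    have hone : 1 < Δ ^ (-ε) * r := by
      have h1 : Δ ^ (-ε) * Δ ^ ε = 1 := by
        rw [← Real.rpow_add hΔ0]; norm_num
      have h2 : (0:ℝ) < Δ ^ (-ε) := Real.rpow_pos_of_pos hΔ0 _
      calc (1:ℝ) = Δ ^ (-ε) * Δ ^ ε := h1.symm
        _ < Δ ^ (-ε) * r := by exact (mul_lt_mul_iff_right₀ h2).mpr hrε
    have hcast : (mcount p P (Q ∩ Metric.closedBall x (r * Δ ^ ((k:ℝ) * ε))) : ℝ) ≤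
        (mcount p P Q : ℝ) := Nat.cast_le.mpr hQsub
    nlinarith [hcast, hMQ0, hone]
  · -- fine case: use scale m = k + n
    set m : ℕ := k + n with hm
    have hkm : k < m := by omega
    have hmK : m ≤ K := by
      have h2 : t * K ≤ (K:ℝ) - (k:ℝ) := by
        have hkε : ((k:ℝ) * ε) * K = k := by
          rw [hε]; field_simp
        nlinarith [htle, hKpos]
      have h3 : (n:ℝ) + (k:ℝ) ≤ (K:ℝ) := by linarith
      have h4 : n + k ≤ K := by exact_mod_cast h3
      omega
    have hm1 : 1 ≤ m := by omega
    have hsplit : Δ ^ ((m:ℝ) * ε) = Δ ^ ((k:ℝ) * ε) * Δ ^ ((n:ℝ) * ε) := by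
      rw [← Real.rpow_add hΔ0]
      congr 1
      push_cast [hm]
      ring
    have hnεt : (n:ℝ) * ε ≤ t := by
      rw [hε, mul_one_div, div_le_iff₀ hKpos]; exact hnle
    have hrn : r ≤ Δ ^ ((n:ℝ) * ε) := by
      rw [← hrt]
      exact Real.rpow_le_rpow_of_exponent_ge hΔ0 hΔ1.le hnεt
    have hwpos : (0:ℝ) < Δ ^ ((k:ℝ) * ε) := Real.rpow_pos_of_pos hΔ0 _
    have hρpos : (0:ℝ) < Δ ^ ((m:ℝ) * ε) := Real.rpow_pos_of_pos hΔ0 _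
    have hball : r * Δ ^ ((k:ℝ) * ε) ≤ Δ ^ ((m:ℝ) * ε) := by
      rw [hsplit]
      calc r * Δ ^ ((k:ℝ) * ε) ≤ Δ ^ ((n:ℝ) * ε) * Δ ^ ((k:ℝ) * ε) := by
            exact mul_le_mul_of_nonneg_right hrn hwpos.le
        _ = Δ ^ ((k:ℝ) * ε) * Δ ^ ((n:ℝ) * ε) := by ring
    have hsub : Q ∩ Metric.closedBall x (r * Δ ^ ((k:ℝ) * ε)) ⊆
        Metric.closedBall x (Δ ^ ((m:ℝ) * ε)) :=
      Set.inter_subset_right.trans (Metric.closedBall_subset_closedBall hball)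
    have hle1 : mcount p P (Q ∩ Metric.closedBall x (r * Δ ^ ((k:ℝ) * ε))) ≤
        mcount p P (Metric.closedBall x (Δ ^ ((m:ℝ) * ε))) := mcount_mono p P hsub
    by_cases h0 : mcount p P (Metric.closedBall x (Δ ^ ((m:ℝ) * ε))) = 0
    · have hz : mcount p P (Q ∩ Metric.closedBall x (r * Δ ^ ((k:ℝ) * ε))) = 0 := by omega
      rw [hz]
      have hpos : (0:ℝ) < Δ ^ (-ε) := Real.rpow_pos_of_pos hΔ0 _
      have h4 : (0:ℝ) ≤ 4 * Δ ^ (-ε) * r * (mcount p P Q : ℝ) :=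
        mul_nonneg (mul_nonneg (mul_nonneg (by norm_num) hpos.le) hr0.le) hMQ0
      exact_mod_cast h4
    · -- the containing ρ-cube
      set Qt : Set (ℤ_[p] × ℤ_[p]) := Metric.closedBall x (Δ ^ ((m:ℝ) * ε)) with hQt
      have hQtmem : Qt ∈ cubesOf p (Δ ^ ((m:ℝ) * ε)) P :=
        ⟨⟨x, rfl⟩, Nat.pos_of_ne_zero h0⟩
      have hu_m := hunif m hm1 hmK
      have hu_k := hunif k hk1 hkK
      have hupper := count_upper p hρpos.le P hQtmem hu_m
      have hlower := count_lower p hwpos.le P hQ hu_k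
      have hNm1 : 1 ≤ (cubesOf p (Δ ^ ((m:ℝ) * ε)) P).ncard :=
        (Set.ncard_pos (cubesOf_finite p _ P)).mpr ⟨Qt, hQtmem⟩
      -- Δ^{kε} N_k < Δ^{mε} N_m
      have hNN : Δ ^ ((k:ℝ) * ε) * ((cubesOf p (Δ ^ ((k:ℝ) * ε)) P).ncard : ℝ) <
          Δ ^ ((m:ℝ) * ε) * ((cubesOf p (Δ ^ ((m:ℝ) * ε)) P).ncard : ℝ) := by
        have h := lt_of_lt_of_le hwin (hfail m hkm hmK)
        have hpos2 : (0:ℝ) < 2 * Δ ^ (-ε) := by positivity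
        refine (mul_lt_mul_iff_right₀ hpos2).mp ?_
        calc 2 * Δ ^ (-ε) * (Δ ^ ((k:ℝ) * ε) * ((cubesOf p (Δ ^ ((k:ℝ) * ε)) P).ncard : ℝ))
            = 2 * Δ ^ (-ε) * Δ ^ ((k:ℝ) * ε) * ((cubesOf p (Δ ^ ((k:ℝ) * ε)) P).ncard : ℝ) := by
              ring
          _ < 2 * Δ ^ (-ε) * Δ ^ ((m:ℝ) * ε) * ((cubesOf p (Δ ^ ((m:ℝ) * ε)) P).ncard : ℝ) := h
          _ = 2 * Δ ^ (-ε) * (Δ ^ ((m:ℝ) * ε) * ((cubesOf p (Δ ^ ((m:ℝ) * ε)) P).ncard : ℝ)) := by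
              ring
      have hNkm : ((cubesOf p (Δ ^ ((k:ℝ) * ε)) P).ncard : ℝ) <
          Δ ^ ((n:ℝ) * ε) * ((cubesOf p (Δ ^ ((m:ℝ) * ε)) P).ncard : ℝ) := by
        refine (mul_lt_mul_iff_right₀ hwpos).mp ?_
        calc Δ ^ ((k:ℝ) * ε) * ((cubesOf p (Δ ^ ((k:ℝ) * ε)) P).ncard : ℝ)
            < Δ ^ ((m:ℝ) * ε) * ((cubesOf p (Δ ^ ((m:ℝ) * ε)) P).ncard : ℝ) := hNN
          _ = Δ ^ ((k:ℝ) * ε) *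
              (Δ ^ ((n:ℝ) * ε) * ((cubesOf p (Δ ^ ((m:ℝ) * ε)) P).ncard : ℝ)) := by
              rw [hsplit]; ring
      -- Δ^{nε} ≤ Δ^{-ε} r
      have hf6 : Δ ^ ((n:ℝ) * ε) ≤ Δ ^ (-ε) * r := by
        have h1 : t - ε ≤ (n:ℝ) * ε := by
          have h2 : t < ((n:ℝ) + 1) * ε := by
            rw [hε, mul_one_div, lt_div_iff₀ hKpos]
            exact hnlt
          have h3 : ((n:ℝ) + 1) * ε = (n:ℝ) * ε + ε := by ring
          linarith
        have h2 : Δ ^ ((n:ℝ) * ε) ≤ Δ ^ (t - ε) :=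
          Real.rpow_le_rpow_of_exponent_ge hΔ0 hΔ1.le h1
        have h3 : Δ ^ (t - ε) = Δ ^ (-ε) * r := by
          rw [← hrt, ← Real.rpow_add hΔ0]
          congr 1
          ring
        linarith [h2, h3.le, h3.ge]
      have hD0 : (0:ℝ) ≤ Δ ^ ((n:ℝ) * ε) := (Real.rpow_pos_of_pos hΔ0 _).le
      have f1 : (mcount p P (Q ∩ Metric.closedBall x (r * Δ ^ ((k:ℝ) * ε))) : ℝ) ≤
          (mcount p P Qt : ℝ) := Nat.cast_le.mpr hle1
      have f2 : ((cubesOf p (Δ ^ ((m:ℝ) * ε)) P).ncard : ℝ) * (mcount p P Qt : ℝ) ≤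
          2 * (Multiset.card P : ℝ) := by exact_mod_cast hupper
      have f3 : (Multiset.card P : ℝ) ≤
          2 * ((cubesOf p (Δ ^ ((k:ℝ) * ε)) P).ncard : ℝ) * (mcount p P Q : ℝ) := by
        exact_mod_cast hlower
      have f5 : (1:ℝ) ≤ ((cubesOf p (Δ ^ ((m:ℝ) * ε)) P).ncard : ℝ) := by
        exact_mod_cast hNm1
      have key : (mcount p P Qt : ℝ) ≤ 4 * (Δ ^ (-ε) * r) * (mcount p P Q : ℝ) :=
        arith_helper f2 f3 hNkm f5 hf6 hMQ0 hD0
      calc (mcount p P (Q ∩ Metric.closedBall x (r * Δ ^ ((k:ℝ) * ε))) : ℝ)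
          ≤ (mcount p P Qt : ℝ) := f1
        _ ≤ 4 * (Δ ^ (-ε) * r) * (mcount p P Q : ℝ) := key
        _ = 4 * Δ ^ (-ε) * r * (mcount p P Q : ℝ) := by ring
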